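/- Let A = ℝ \ ({0} ∪ {1/n : n ∈ ℕ, n ≥ 1}). Then the Hattori space (ℝ, τ_A) is σ-compact but not locally compact. -/

import Mathlib

open Set

/-- The Hattori topology on ℝ: points of `A` have Euclidean neighborhood base
`(x-ε, x+ε)`, points outside `A` have Sorgenfrey neighborhood base `[x, x+ε)`. -/
def hattori (A : Set ℝ) : TopologicalSpace ℝ where
  IsOpen U := ∀ x ∈ U, ∃ ε > (0 : ℝ),
    (x ∈ A → Ioo (x - ε) (x + ε) ⊆ U) ∧ (x ∉ A → Ico x (x + ε) ⊆ U)
  isOpen_univ := fun x _ => ⟨1, one_pos, fun _ => subset_univ _, fun _ => subset_univ _⟩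
  isOpen_inter := by
    intro U V hU hV x hx
    obtain ⟨ε₁, hε₁, h₁, h₁'⟩ := hU x hx.1
    obtain ⟨ε₂, hε₂, h₂, h₂'⟩ := hV x hx.2
    have l1 := min_le_left ε₁ ε₂
    have l2 := min_le_right ε₁ ε₂
    refine ⟨min ε₁ ε₂, lt_min hε₁ hε₂, fun hA => ?_, fun hA => ?_⟩
    · intro y hy
      exact ⟨h₁ hA ⟨by linarith [hy.1], by linarith [hy.2]⟩,
             h₂ hA ⟨by linarith [hy.1], by linarith [hy.2]⟩⟩
    · intro y hy
      exact ⟨h₁' hA ⟨hy.1, by linarith [hy.2]⟩, h₂' hA ⟨hy.1, by linarith [hy.2]⟩⟩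
  isOpen_sUnion := by
    intro S hS x hx
    obtain ⟨U, hU, hxU⟩ := hx
    obtain ⟨ε, hε, h, h'⟩ := hS U hU x hxU
    exact ⟨ε, hε, fun hA => (h hA).trans (subset_sUnion_of_mem hU),
      fun hA => (h' hA).trans (subset_sUnion_of_mem hU)⟩

/-- The Sorgenfrey (lower limit) topology on ℝ. -/
def sorgenfrey : TopologicalSpace ℝ :=
  TopologicalSpace.generateFrom {S | ∃ a b : ℝ, S = Ico a b}

lemma hattori_of_isOpen {A U : Set ℝ} (h : IsOpen U) : @IsOpen ℝ (hattori A) U := by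
  show ∀ x ∈ U, _
  intro x hx
  obtain ⟨ε, hε, hball⟩ := Metric.isOpen_iff.1 h x hx
  rw [Real.ball_eq_Ioo] at hball
  exact ⟨ε, hε, fun _ => hball, fun _ y hy => hball ⟨by linarith [hy.1], hy.2⟩⟩

lemma hattori_Ico {A : Set ℝ} {a b : ℝ} (ha : a ∉ A) : @IsOpen ℝ (hattori A) (Ico a b) := by
  show ∀ x ∈ Ico a b, _
  intro x hx
  by_cases hxA : x ∈ A
  · have hax : a < x := lt_of_le_of_ne hx.1 (fun h => (h ▸ ha) hxA)
    refine ⟨min (x - a) (b - x), lt_min (by linarith) (by linarith [hx.2]), fun _ => ?_, fun h => absurd hxA h⟩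
    intro y hy
    have l1 := min_le_left (x-a) (b-x); have l2 := min_le_right (x-a) (b-x)
    exact ⟨by linarith [hy.1], by linarith [hy.2]⟩
  · refine ⟨b - x, by linarith [hx.2], fun h => absurd h hxA, fun _ => ?_⟩
    intro y hy
    exact ⟨le_trans hx.1 hy.1, by linarith [hy.2]⟩

lemma hattori_compact {A K : Set ℝ} (hK : IsCompact K)
    (hgap : ∀ s : ℝ, s ∉ A → ∃ δ > (0:ℝ), Ioo (s - δ) s ∩ K = ∅) :
    @IsCompact ℝ (hattori A) K := by
  refine @isCompact_of_finite_subcover ℝ (hattori A) K ?_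
  intro ι U hUopen hcover
  have key : ∀ x : K, ∃ (i : ι) (V : Set ℝ), IsOpen V ∧ (x:ℝ) ∈ V ∧ V ∩ K ⊆ U i := by
    rintro ⟨x, hx⟩
    obtain ⟨i, hi⟩ := mem_iUnion.1 (hcover hx)
    obtain ⟨ε, hε, h1, h2⟩ := hUopen i x hi
    by_cases hxA : x ∈ A
    · exact ⟨i, Ioo (x - ε) (x + ε), isOpen_Ioo, ⟨by linarith, by linarith⟩,
        fun y hy => h1 hxA hy.1⟩
    · obtain ⟨δ, hδ, hg⟩ := hgap x hxA
      refine ⟨i, Ioo (x - δ) (x + ε), isOpen_Ioo, ⟨by linarith, by linarith⟩, ?_⟩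
      rintro y ⟨⟨hy1, hy2⟩, hyK⟩
      rcases lt_or_ge y x with h | h
      · have : y ∈ Ioo (x - δ) x ∩ K := ⟨⟨hy1, h⟩, hyK⟩
        rw [hg] at this
        exact absurd this (notMem_empty y)
      · exact h2 hxA ⟨h, hy2⟩
  classical
  choose i V hVo hxV hVs using key
  obtain ⟨t, ht⟩ := hK.elim_finite_subcover V hVo (fun y hy => mem_iUnion.2 ⟨⟨y, hy⟩, hxV _⟩)
  refine ⟨t.image i, fun y hy => ?_⟩
  obtain ⟨x, hxt, hyV⟩ := mem_iUnion₂.1 (ht hy)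
  exact mem_iUnion₂.2 ⟨i x, Finset.mem_image_of_mem i hxt, hVs x ⟨hyV, hy⟩⟩

def Fcov (a b c : ℝ) : ℕ → Set ℝ
  | 0 => (Icc a b)ᶜ
  | 1 => Ico b (b+1)
  | 2 => Ico a c
  | (m+3) => Ioo a (b - (b-a)/((m:ℝ)+1))

theorem stmt15 :
    @SigmaCompactSpace ℝ
        (hattori ({0} ∪ {x : ℝ | ∃ n : ℕ, 1 ≤ n ∧ x = 1 / (n : ℝ)})ᶜ) ∧
      ¬ @WeaklyLocallyCompactSpace ℝ
        (hattori ({0} ∪ {x : ℝ | ∃ n : ℕ, 1 ≤ n ∧ x = 1 / (n : ℝ)})ᶜ) := by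
  set S : Set ℝ := {0} ∪ {x : ℝ | ∃ n : ℕ, 1 ≤ n ∧ x = 1 / (n : ℝ)} with hSdef
  have h0S : (0:ℝ) ∈ S := Or.inl rfl
  have hinvS : ∀ m : ℕ, 1 ≤ m → (1/(m:ℝ)) ∈ S := fun m hm => Or.inr ⟨m, hm, rfl⟩
  have hmemS : ∀ s : ℝ, s ∈ S → s = 0 ∨ ∃ m : ℕ, 1 ≤ m ∧ s = 1/(m:ℝ) := by
    rintro s (h | ⟨m, hm, hs⟩)
    · exact Or.inl h
    · exact Or.inr ⟨m, hm, hs⟩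
  constructor
  · -- σ-compact
    refine @SigmaCompactSpace.mk ℝ (hattori Sᶜ) ⟨fun n => Icc (-((n:ℝ)+1)) (-(1/((n:ℝ)+1))) ∪ {0} ∪ Icc 1 ((n:ℝ)+1) ∪
        ⋃ k ∈ Finset.range (n+1), Icc (1/((k:ℝ)+2)) (1/((k:ℝ)+1) - 1/((n:ℝ)+1)),
      fun n => ?_, ?_⟩
    · apply hattori_compact
      · refine (((isCompact_Icc.union isCompact_singleton).union isCompact_Icc).union ?_)
        exact (Finset.range (n+1)).finite_toSet.isCompact_biUnion (fun k _ => isCompact_Icc)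
      · intro s hs
        have hsS : s ∈ S := not_notMem.1 hs
        rcases hmemS s hsS with rfl | ⟨m, hm, rfl⟩
        · refine ⟨1/((n:ℝ)+1), by positivity, ?_⟩
          rw [eq_empty_iff_forall_notMem]
          rintro y ⟨⟨hy1, hy2⟩, hyK⟩
          have hn1 : (0:ℝ) < 1/((n:ℝ)+1) := by positivity
          rcases hyK with ((h | h) | h) | h
          · have := h.2; linarith
          · simp only [mem_singleton_iff] at h; linarith
          · have := h.1; linarith
          · simp only [mem_iUnion, Finset.mem_range, mem_Icc] at h
            obtain ⟨k, hk, hk1, hk2⟩ := h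
            have : (0:ℝ) < 1/((k:ℝ)+2) := by positivity
            linarith
        · have hm0 : (0:ℝ) < m := by exact_mod_cast hm
          have hmm : 1/((m:ℝ)+1) < 1/(m:ℝ) := by
            apply one_div_lt_one_div_of_lt hm0; linarith
          refine ⟨min (1/((n:ℝ)+1)) (1/(m:ℝ) - 1/((m:ℝ)+1)),
            lt_min (by positivity) (by linarith), ?_⟩
          rw [eq_empty_iff_forall_notMem]
          rintro y ⟨⟨hy1, hy2⟩, hyK⟩
          have l1 := min_le_left (1/((n:ℝ)+1)) (1/(m:ℝ) - 1/((m:ℝ)+1))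
          have l2 := min_le_right (1/((n:ℝ)+1)) (1/(m:ℝ) - 1/((m:ℝ)+1))
          have hy3 : 1/((m:ℝ)+1) < y := by linarith
          have hy0 : (0:ℝ) < y := lt_trans (by positivity) hy3
          have hm1 : 1/(m:ℝ) ≤ 1 := by
            have h1 : (1:ℝ) ≤ m := by exact_mod_cast hm
            calc 1/(m:ℝ) ≤ 1/1 := one_div_le_one_div_of_le one_pos h1
              _ = 1 := by norm_num
          have hn1 : (0:ℝ) < 1/((n:ℝ)+1) := by positivity
          rcases hyK with ((h | h) | h) | h
          · have := h.2; linarith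
          · simp only [mem_singleton_iff] at h; linarith
          · have := h.1; linarith
          · simp only [mem_iUnion, Finset.mem_range, mem_Icc] at h
            obtain ⟨k, hk, hk1, hk2⟩ := h
            rcases lt_trichotomy (k+1) m with hc | hc | hc
            · have hc2 : ((k:ℝ)+2) ≤ m := by exact_mod_cast hc
              have := one_div_le_one_div_of_le (by positivity) hc2
              linarith
            · have hc2 : ((k:ℝ)+1) = m := by exact_mod_cast hc
              rw [hc2] at hk2
              linarith
            · have hc2 : ((m:ℝ)+1) ≤ (k:ℝ)+1 := by exact_mod_cast hc
              have := one_div_le_one_div_of_le (by positivity) hc2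
              linarith
    · apply eq_univ_of_forall
      intro x
      rw [mem_iUnion]
      rcases lt_trichotomy x 0 with hx | rfl | hx
      · obtain ⟨n₁, hn₁⟩ := exists_nat_gt (-x)
        obtain ⟨n₂, hn₂⟩ := exists_nat_one_div_lt (show (0:ℝ) < -x by linarith)
        refine ⟨max n₁ n₂, Or.inl (Or.inl (Or.inl ⟨?_, ?_⟩))⟩
        · have h1 : (n₁:ℝ) ≤ ((max n₁ n₂ : ℕ):ℝ) := by exact_mod_cast le_max_left n₁ n₂
          linarith
        · have h1 : ((n₂:ℝ)+1) ≤ ((max n₁ n₂ : ℕ):ℝ)+1 := by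
            have : (n₂:ℝ) ≤ ((max n₁ n₂ : ℕ):ℝ) := by exact_mod_cast le_max_right n₁ n₂
            linarith
          have := one_div_le_one_div_of_le (by positivity) h1
          linarith
      · exact ⟨0, Or.inl (Or.inl (Or.inr rfl))⟩
      · rcases le_or_gt 1 x with hx1 | hx1
        · obtain ⟨n, hn⟩ := exists_nat_gt x
          exact ⟨n, Or.inl (Or.inr ⟨hx1, by linarith⟩)⟩
        · have hex : ∃ k : ℕ, 1/((k:ℝ)+2) ≤ x := by
            obtain ⟨j, hj⟩ := exists_nat_one_div_lt hx
            refine ⟨j, le_of_lt (lt_of_le_of_lt ?_ hj)⟩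
            apply one_div_le_one_div_of_le (by positivity)
            linarith
          classical
          set k₀ := Nat.find hex with hk₀def
          have hk1 : 1/((k₀:ℝ)+2) ≤ x := Nat.find_spec hex
          have hk2 : x < 1/((k₀:ℝ)+1) := by
            rcases Nat.eq_zero_or_eq_succ_pred k₀ with h0 | hsucc
            · rw [h0]; norm_num; linarith
            · have hmin := Nat.find_min hex (show k₀ - 1 < Nat.find hex by omega)
              push_neg at hmin
              have hcast : ((k₀ - 1 : ℕ):ℝ) + 2 = (k₀:ℝ) + 1 := by
                have : 1 ≤ k₀ := by omega
                push_cast [this]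
                ring
              rw [hcast] at hmin
              exact hmin
          have hgap2 : (0:ℝ) < 1/((k₀:ℝ)+1) - x := by linarith
          obtain ⟨n₂, hn₂⟩ := exists_nat_one_div_lt hgap2
          refine ⟨max k₀ n₂, Or.inr ?_⟩
          simp only [mem_iUnion, Finset.mem_range, mem_Icc]
          refine ⟨k₀, by omega, hk1, ?_⟩
          have h1 : ((n₂:ℝ)+1) ≤ ((max k₀ n₂ : ℕ):ℝ)+1 := by
            have : (n₂:ℝ) ≤ ((max k₀ n₂ : ℕ):ℝ) := by exact_mod_cast le_max_right k₀ n₂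
            linarith
          have := one_div_le_one_div_of_le (by positivity) h1
          linarith
  · -- not weakly locally compact
    intro hW
    obtain ⟨K, hKc, hKn⟩ := @WeaklyLocallyCompactSpace.exists_compact_mem_nhds ℝ (hattori Sᶜ) hW 0
    obtain ⟨U, hUK, hUo, h0U⟩ := (@mem_nhds_iff ℝ (hattori Sᶜ) 0 K).1 hKn
    have h0A : (0:ℝ) ∉ Sᶜ := fun h => h h0S
    have hUo' : ∀ x ∈ U, ∃ ε > (0:ℝ),
        (x ∈ Sᶜ → Ioo (x - ε) (x + ε) ⊆ U) ∧ (x ∉ Sᶜ → Ico x (x + ε) ⊆ U) := hUo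
    obtain ⟨ε, hε, -, h2⟩ := hUo' 0 h0U
    have hIco : Ico 0 ε ⊆ K := by
      intro y hy
      exact hUK (h2 h0A ⟨hy.1, by linarith [hy.2]⟩)
    obtain ⟨k₀, hk₀⟩ := exists_nat_one_div_lt hε
    set a : ℝ := 1/((k₀:ℝ)+2) with hadef
    set b : ℝ := 1/((k₀:ℝ)+1) with hbdef
    set c : ℝ := (a+b)/2 with hcdef
    have ha0 : 0 < a := by positivity
    have hab : a < b := by
      apply one_div_lt_one_div_of_lt (by positivity); linarith
    have hac : a < c := by rw [hcdef]; linarith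
    have hcb : c < b := by rw [hcdef]; linarith
    have hbA : b ∉ Sᶜ := by
      intro h
      apply h
      have := hinvS (k₀+1) (by omega)
      have hc : ((k₀+1:ℕ):ℝ) = (k₀:ℝ)+1 := by push_cast; ring
      rwa [hc] at this
    have haA : a ∉ Sᶜ := by
      intro h
      apply h
      have := hinvS (k₀+2) (by omega)
      have hc : ((k₀+2:ℕ):ℝ) = (k₀:ℝ)+2 := by push_cast; ring
      rwa [hc] at this
    have hIccK : Icc a b ⊆ K := by
      intro y hy
      exact hIco ⟨le_trans (le_of_lt ha0) hy.1, lt_of_le_of_lt hy.2 hk₀⟩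
    have hFo : ∀ i : ℕ, @IsOpen ℝ (hattori Sᶜ) (Fcov a b c i) := by
      rintro (_|_|_|m)
      · exact hattori_of_isOpen isClosed_Icc.isOpen_compl
      · exact hattori_Ico hbA
      · exact hattori_Ico haA
      · exact hattori_of_isOpen isOpen_Ioo
    have hcov : K ⊆ ⋃ i, Fcov a b c i := by
      intro y _
      rw [mem_iUnion]
      by_cases hy : y ∈ Icc a b
      · rcases eq_or_lt_of_le hy.2 with he | hlt
        · exact ⟨1, le_of_eq he.symm, by rw [he]; linarith⟩
        · rcases lt_or_ge y c with h | h
          · exact ⟨2, hy.1, h⟩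
          · have hby : (0:ℝ) < (b-y)/(b-a) := by
              apply div_pos (by linarith) (by linarith)
            obtain ⟨m, hm⟩ := exists_nat_one_div_lt hby
            rw [lt_div_iff₀ (by linarith : (0:ℝ) < b - a)] at hm
            refine ⟨m+3, ⟨by linarith, ?_⟩⟩
            have h2 : (b-a)/((m:ℝ)+1) = 1/((m:ℝ)+1)*(b-a) := by ring
            linarith
      · exact ⟨0, hy⟩
    obtain ⟨t, ht⟩ := @IsCompact.elim_finite_subcover ℝ (hattori Sᶜ) K ℕ hKc (Fcov a b c) hFo hcov
    set M := t.sup id with hMdef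
    set yb := max c (b - (b-a)/((M:ℝ)+1)) with hybdef
    have hyb : yb < b := by
      apply max_lt hcb
      have : (0:ℝ) < (b-a)/((M:ℝ)+1) := div_pos (by linarith) (by positivity)
      linarith
    set z := (yb + b)/2 with hzdef
    have hz1 : yb < z := by rw [hzdef]; linarith
    have hz2 : z < b := by rw [hzdef]; linarith
    have hcyb : c ≤ yb := le_max_left _ _
    have hza : a < z := by linarith
    have hzK : z ∈ K := hIccK ⟨le_of_lt hza, le_of_lt hz2⟩
    obtain ⟨i, hit, hzF⟩ := mem_iUnion₂.1 (ht hzK)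
    rcases i with _|_|_|m
    · exact hzF ⟨le_of_lt hza, le_of_lt hz2⟩
    · exact absurd hzF.1 (not_le.2 hz2)
    · have := hzF.2
      linarith
    · have hmM : ((m:ℝ))+1 ≤ (M:ℝ)+1 := by
        have h1 : m + 3 ≤ M := Finset.le_sup (f := id) hit
        have : (m:ℝ) ≤ (M:ℝ) := by exact_mod_cast by omega
        linarith
      have hdiv : (b-a)/((M:ℝ)+1) ≤ (b-a)/((m:ℝ)+1) := by
        apply div_le_div_of_nonneg_left (by linarith) (by positivity) hmM
      have hyb2 : b - (b-a)/((M:ℝ)+1) ≤ yb := le_max_right _ _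
      have hz3 := hzF.2
      change z < b - (b-a)/((m:ℝ)+1) at hz3
      linarith
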